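/- There is no egr(v,6,5,24)-graph, i.e., there is no 6-regular graph of girth 5 in which every edge lies on exactly 24 cycles of length 5. -/

import Mathlib

open SimpleGraph

/-- `c` is a cycle subgraph of `G` of length `g`. -/
def IsCycleSub {V : Type*} (G : SimpleGraph V) (g : ℕ) (c : G.Subgraph) : Prop :=
  ∃ (a : V) (w : G.Walk a a), w.IsCycle ∧ w.length = g ∧ c = w.toSubgraph

/-- `p` is a path subgraph of `G` on `n` vertices. -/
def IsPathSub {V : Type*} (G : SimpleGraph V) (n : ℕ) (p : G.Subgraph) : Prop :=
  ∃ (a b : V) (w : G.Walk a b), w.IsPath ∧ w.length + 1 = n ∧ p = w.toSubgraph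

/-- `G` is an edge-girth-regular `(v,k,g,λ)`-graph. -/
def IsEGR {V : Type*} (G : SimpleGraph V) (v k g lam : ℕ) : Prop :=
  Nat.card V = v ∧ (∀ x : V, (G.neighborSet x).ncard = k) ∧ G.girth = g ∧
  ∀ e ∈ G.edgeSet,
    {c : G.Subgraph | IsCycleSub G g c ∧ e ∈ c.edgeSet}.ncard = lam


open Set

namespace EGR

variable {α β : Type*}

lemma sum_ge_two {s : Finset β} {f : β → ℕ} {b1 b2 : β} (h1 : b1 ∈ s) (h2 : b2 ∈ s)
    (hne : b1 ≠ b2) (hf1 : 1 ≤ f b1) (hf2 : 1 ≤ f b2) : 2 ≤ ∑ b ∈ s, f b := by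
  classical
  have hsub : ({b1, b2} : Finset β) ⊆ s := by
    intro x hx; simp only [Finset.mem_insert, Finset.mem_singleton] at hx
    rcases hx with rfl | rfl <;> assumption
  calc 2 ≤ ∑ b ∈ ({b1, b2} : Finset β), f b := by rw [Finset.sum_pair hne]; omega
    _ ≤ ∑ b ∈ s, f b := Finset.sum_le_sum_of_subset hsub

lemma sum_eq_one_unique {s : Finset β} {f : β → ℕ} (h : ∑ b ∈ s, f b = 1)
    {b1 b2 : β} (h1 : b1 ∈ s) (h2 : b2 ∈ s) (hf1 : 1 ≤ f b1) (hf2 : 1 ≤ f b2) : b1 = b2 := by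
  by_contra hne
  have := sum_ge_two h1 h2 hne hf1 hf2
  omega

lemma sum_le_mem {s : Finset β} {f : β → ℕ} {b : β} (h : b ∈ s) :
    f b ≤ ∑ x ∈ s, f x :=
  Finset.single_le_sum (fun _ _ => Nat.zero_le _) h

lemma sum_pos_exists {s : Finset β} {f : β → ℕ} (h : 1 ≤ ∑ b ∈ s, f b) :
    ∃ b ∈ s, 1 ≤ f b := by
  by_contra hc
  push_neg at hc
  have : ∑ b ∈ s, f b = 0 := Finset.sum_eq_zero (fun b hb => by have := hc b hb; omega)
  omega

lemma ncard_biUnion (s : Finset β) (f : β → Set α)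
    (hf : ∀ b ∈ s, (f b).Finite)
    (hdisj : ∀ b1 ∈ s, ∀ b2 ∈ s, b1 ≠ b2 → ∀ x, x ∈ f b1 → x ∈ f b2 → False) :
    (⋃ b ∈ s, f b).ncard = ∑ b ∈ s, (f b).ncard := by
  classical
  induction s using Finset.induction_on with
  | empty => simp
  | @insert a s ha ih =>
    rw [Finset.set_biUnion_insert, Finset.sum_insert ha]
    have hfin2 : (⋃ b ∈ s, f b).Finite :=
      Set.Finite.biUnion s.finite_toSet (fun b hb => hf b (Finset.mem_insert_of_mem hb))
    rw [Set.ncard_union_eq ?_ (hf a (Finset.mem_insert_self a s)) hfin2]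
    · rw [ih (fun b hb => hf b (Finset.mem_insert_of_mem hb))
        (fun b1 h1 b2 h2 hne x hx1 hx2 => hdisj b1 (Finset.mem_insert_of_mem h1) b2
          (Finset.mem_insert_of_mem h2) hne x hx1 hx2)]
    · rw [Set.disjoint_left]
      rintro x hxa hxu
      simp only [Set.mem_iUnion] at hxu
      obtain ⟨b, hb, hxb⟩ := hxu
      exact hdisj a (Finset.mem_insert_self a s) b (Finset.mem_insert_of_mem hb)
        (fun e => ha (e ▸ hb)) x hxa hxb

lemma biUnion_finite (s : Finset β) (f : β → Set α) (hf : ∀ b ∈ s, (f b).Finite) :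
    (⋃ b ∈ s, f b).Finite :=
  Set.Finite.biUnion s.finite_toSet hf

end EGR

namespace EGR

variable {V : Type*} (G : SimpleGraph V)

/-- Tuples giving 5-cycles through ordered edge (u,v). -/
def P (u v : V) : Set (V × V × V) :=
  {t | G.Adj u t.1 ∧ G.Adj t.1 t.2.1 ∧ G.Adj t.2.1 t.2.2 ∧ G.Adj t.2.2 v}

/-- Vertices at distance 2 from u. -/
def D2 (u : V) : Set V :=
  {x | ¬ G.Adj u x ∧ x ≠ u ∧ ∃ a, G.Adj u a ∧ G.Adj a x}

/-- Vertices at distance 3 from u. -/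
def D3 (u : V) : Set V :=
  {x | ¬ G.Adj u x ∧ x ≠ u ∧ x ∉ D2 G u ∧ ∃ b ∈ D2 G u, G.Adj b x}

structure Setup : Prop where
  tri : ∀ ⦃x y z : V⦄, G.Adj x y → G.Adj y z → G.Adj z x → False
  quad : ∀ ⦃x y z w : V⦄, G.Adj x y → G.Adj y z → G.Adj z w → G.Adj w x → x ≠ z → y ≠ w → False
  reg : ∀ x : V, (G.neighborSet x).ncard = 6
  lam : ∀ ⦃u v : V⦄, G.Adj u v → (P G u v).ncard = 24

variable {G}

lemma Setup.nfin (h : Setup G) (x : V) : (G.neighborSet x).Finite := by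
  by_contra hc
  have : (G.neighborSet x).ncard = 0 := Set.Infinite.ncard hc
  rw [h.reg x] at this
  omega

lemma att_unique (h : Setup G) {u b a a' : V} (hub : ¬ G.Adj u b) (hub' : b ≠ u)
    (h1 : G.Adj u a) (h2 : G.Adj a b) (h1' : G.Adj u a') (h2' : G.Adj a' b) : a = a' := by
  by_contra hne
  exact h.quad h1 h2 h2'.symm h1'.symm hub'.symm hne

lemma common_unique (h : Setup G) {x y b b' : V} (hxy : x ≠ y)
    (h1 : G.Adj x b) (h2 : G.Adj b y) (h1' : G.Adj x b') (h2' : G.Adj b' y) : b = b' := by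
  by_contra hne
  exact h.quad h1 h2 h2'.symm h1'.symm hxy hne

lemma nbr_of_nbr_mem (h : Setup G) {u a x : V} (hua : G.Adj u a) (hax : G.Adj a x)
    (hxu : x ≠ u) : x ∈ D2 G u := by
  refine ⟨fun hux => h.tri hua hax hux.symm, hxu, a, hua, hax⟩

lemma D2_not_adj {u x : V} (hx : x ∈ D2 G u) : ¬ G.Adj u x := hx.1
lemma D2_ne {u x : V} (hx : x ∈ D2 G u) : x ≠ u := hx.2.1
lemma D3_not_adj {u x : V} (hx : x ∈ D3 G u) : ¬ G.Adj u x := hx.1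
lemma D3_ne {u x : V} (hx : x ∈ D3 G u) : x ≠ u := hx.2.1
lemma D3_not_D2 {u x : V} (hx : x ∈ D3 G u) : x ∉ D2 G u := hx.2.2.1

lemma fiber5 (h : Setup G) {u a : V} (hua : G.Adj u a) :
    (G.neighborSet a \ {u}).ncard = 5 := by
  rw [Set.ncard_diff_singleton_of_mem ((G.mem_neighborSet a u).mpr hua.symm), h.reg a]

lemma D2_eq (h : Setup G) (u : V) :
    D2 G u = ⋃ a ∈ (h.nfin u).toFinset, (G.neighborSet a \ {u}) := by
  ext x
  simp only [Set.mem_iUnion, Set.Finite.mem_toFinset, SimpleGraph.mem_neighborSet,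
    Set.mem_diff, Set.mem_singleton_iff, exists_prop]
  constructor
  · rintro ⟨hnux, hxu, a, hua, hax⟩
    exact ⟨a, hua, hax, hxu⟩
  · rintro ⟨a, hua, hax, hxu⟩
    exact nbr_of_nbr_mem h hua hax hxu

lemma D2_finite (h : Setup G) (u : V) : (D2 G u).Finite := by
  rw [D2_eq h u]
  exact biUnion_finite _ _ (fun a _ => (h.nfin a).diff)

lemma ncard_D2 (h : Setup G) (u : V) : (D2 G u).ncard = 30 := by
  rw [D2_eq h u, ncard_biUnion _ _ (fun a _ => (h.nfin a).diff)]
  · have hcongr : ∀ a ∈ (h.nfin u).toFinset, (G.neighborSet a \ {u}).ncard = 5 := by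
      intro a ha
      exact fiber5 h ((G.mem_neighborSet u a).mp ((h.nfin u).mem_toFinset.mp ha))
    rw [Finset.sum_congr rfl hcongr, Finset.sum_const, smul_eq_mul]
    have : (h.nfin u).toFinset.card = 6 := by
      rw [← Set.ncard_eq_toFinset_card _ (h.nfin u), h.reg u]
    rw [this]
  · intro a1 h1 a2 h2 hne x hx1 hx2
    rw [Set.Finite.mem_toFinset] at h1 h2
    obtain ⟨hax1, hxu⟩ := hx1
    obtain ⟨hax2, _⟩ := hx2
    rw [SimpleGraph.mem_neighborSet] at hax1 hax2
    have hxD2 := nbr_of_nbr_mem h h1 hax1 hxu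
    exact hne (att_unique h (D2_not_adj hxD2) (D2_ne hxD2) h1 hax1 h2 hax2)

lemma mem_D3_of_D2_nbr (h : Setup G) {u b x : V} (hb : b ∈ D2 G u) (hbx : G.Adj b x)
    (h1 : ¬ G.Adj u x) (h2 : x ≠ u) (h3 : x ∉ D2 G u) : x ∈ D3 G u :=
  ⟨h1, h2, h3, b, hb, hbx⟩

/-- Partition of the neighborhood of a distance-2 vertex. -/
lemma part5 (h : Setup G) {u v c : V} (huv : G.Adj u v) (hvc : G.Adj v c) (hcu : c ≠ u) :
    (G.neighborSet c ∩ D2 G u).ncard + (G.neighborSet c ∩ D3 G u).ncard = 5 := by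
  have hcD2 : c ∈ D2 G u := nbr_of_nbr_mem h huv hvc hcu
  have hnuc : ¬ G.Adj u c := D2_not_adj hcD2
  have key : G.neighborSet c =
      insert v ((G.neighborSet c ∩ D2 G u) ∪ (G.neighborSet c ∩ D3 G u)) := by
    ext x
    simp only [SimpleGraph.mem_neighborSet, Set.mem_insert_iff, Set.mem_union, Set.mem_inter_iff]
    constructor
    · intro hcx
      by_cases hxv : x = v
      · exact Or.inl hxv
      · refine Or.inr ?_
        have hxu : x ≠ u := fun e => hnuc (e ▸ hcx).symm
        have hnux : ¬ G.Adj u x := fun hux =>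
          hxv (att_unique h hnuc (D2_ne hcD2) hux hcx.symm huv hvc)
        by_cases hxD2 : x ∈ D2 G u
        · exact Or.inl ⟨hcx, hxD2⟩
        · exact Or.inr ⟨hcx, mem_D3_of_D2_nbr h hcD2 hcx hnux hxu hxD2⟩
    · rintro (rfl | (⟨hcx, _⟩ | ⟨hcx, _⟩)) <;> first | exact hvc.symm | exact hcx
  have hv_not : v ∉ (G.neighborSet c ∩ D2 G u) ∪ (G.neighborSet c ∩ D3 G u) := by
    rintro (⟨_, hvD2⟩ | ⟨_, hvD3⟩)
    · exact D2_not_adj hvD2 huv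
    · exact D3_not_adj hvD3 huv
  have hfin1 : (G.neighborSet c ∩ D2 G u).Finite := (h.nfin c).subset inter_subset_left
  have hfin2 : (G.neighborSet c ∩ D3 G u).Finite := (h.nfin c).subset inter_subset_left
  have hdisj : Disjoint (G.neighborSet c ∩ D2 G u) (G.neighborSet c ∩ D3 G u) := by
    rw [Set.disjoint_left]
    rintro x ⟨_, hx2⟩ ⟨_, hx3⟩
    exact D3_not_D2 hx3 hx2
  have h6 := h.reg c
  rw [key, Set.ncard_insert_of_notMem hv_not (hfin1.union hfin2),
    Set.ncard_union_eq hdisj hfin1 hfin2] at h6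
  omega

/-- F2': for each neighbor v of u, there is exactly one edge from N(v)\{u} to D3. -/
lemma spec_sum (h : Setup G) {u v : V} (huv : G.Adj u v) :
    ∑ c ∈ ((h.nfin v).diff (t := {u})).toFinset, (G.neighborSet c ∩ D3 G u).ncard = 1 := by
  classical
  have h24 := h.lam huv
  -- the projection to the middle vertex
  have hmemP : ∀ t ∈ P G u v, t.2.1 ∈ D2 G u := by
    rintro ⟨a, b, c⟩ ⟨h1, h2, h3, h4⟩
    refine nbr_of_nbr_mem h h1 h2 (fun e => h.tri (e ▸ h3) h4 huv.symm)
  have himg : (fun t : V × V × V => t.2.1) '' P G u v =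
      ⋃ c ∈ ((h.nfin v).diff (t := {u})).toFinset, (G.neighborSet c ∩ D2 G u) := by
    ext b
    simp only [Set.mem_image, Set.mem_iUnion, Set.Finite.mem_toFinset, Set.mem_diff,
      Set.mem_singleton_iff, SimpleGraph.mem_neighborSet, Set.mem_inter_iff, exists_prop]
    constructor
    · rintro ⟨⟨a, b', c⟩, ht, rfl⟩
      have hbD2 := hmemP _ ht
      obtain ⟨h1, h2, h3, h4⟩ := ht
      refine ⟨c, ⟨h4.symm, fun e => D2_not_adj hbD2 (e ▸ h3).symm⟩, h3.symm, hbD2⟩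
    · rintro ⟨c, ⟨hvc, hcu⟩, hcb, hbD2⟩
      obtain ⟨hnub, hbu, a, hua, hab⟩ := hbD2
      exact ⟨⟨a, b, c⟩, ⟨hua, hab, hcb.symm, hvc.symm⟩, rfl⟩
  have hinj : Set.InjOn (fun t : V × V × V => t.2.1) (P G u v) := by
    rintro ⟨a, b, c⟩ ht ⟨a', b', c'⟩ ht' hbe
    simp only at hbe
    subst hbe
    have hbD2 := hmemP _ ht
    obtain ⟨h1, h2, h3, h4⟩ := ht
    obtain ⟨h1', h2', h3', h4'⟩ := ht'
    have hbv : b ≠ v := fun e => D2_not_adj hbD2 (e ▸ huv)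
    have hac : a = a' := att_unique h (D2_not_adj hbD2) (D2_ne hbD2) h1 h2 h1' h2'
    have hcc : c = c' := common_unique h hbv h3 h4 h3' h4'
    rw [hac, hcc]
  have hcount : (⋃ c ∈ ((h.nfin v).diff (t := {u})).toFinset,
      (G.neighborSet c ∩ D2 G u)).ncard = 24 := by
    rw [← himg, Set.ncard_image_of_injOn hinj, h24]
  rw [ncard_biUnion _ _ (fun c _ => (h.nfin c).subset inter_subset_left)] at hcount
  · have hmem : ∀ c ∈ ((h.nfin v).diff (t := {u})).toFinset, G.Adj v c ∧ c ≠ u := by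
      intro c hc
      rw [Set.Finite.mem_toFinset, Set.mem_diff, Set.mem_singleton_iff,
        SimpleGraph.mem_neighborSet] at hc
      exact hc
    have hsplit : ∀ c ∈ ((h.nfin v).diff (t := {u})).toFinset,
        (G.neighborSet c ∩ D2 G u).ncard + (G.neighborSet c ∩ D3 G u).ncard = 5 := by
      intro c hc
      exact part5 h huv (hmem c hc).1 (hmem c hc).2
    have hcard : ((h.nfin v).diff (t := {u})).toFinset.card = 5 := by
      rw [← Set.ncard_eq_toFinset_card _ ((h.nfin v).diff (t := {u})), fiber5 h huv]
    have htot : ∑ c ∈ ((h.nfin v).diff (t := {u})).toFinset,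
        ((G.neighborSet c ∩ D2 G u).ncard + (G.neighborSet c ∩ D3 G u).ncard) = 25 := by
      rw [Finset.sum_congr rfl hsplit, Finset.sum_const, hcard, smul_eq_mul]
    rw [Finset.sum_add_distrib, hcount] at htot
    omega
  · intro c1 h1 c2 h2 hne x hx1 hx2
    rw [Set.Finite.mem_toFinset, Set.mem_diff, Set.mem_singleton_iff] at h1 h2
    obtain ⟨hx1n, hxD2⟩ := hx1
    obtain ⟨hx2n, _⟩ := hx2
    rw [SimpleGraph.mem_neighborSet] at hx1n hx2n
    have hxv : x ≠ v := fun e => D2_not_adj hxD2 (e ▸ huv)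
    exact hne (common_unique h (Ne.symm hxv) h1.1 hx1n h2.1 hx2n)

lemma spec_unique (h : Setup G) {u v : V} (huv : G.Adj u v) {c z c' z' : V}
    (hc : G.Adj v c) (hcu : c ≠ u) (hz : G.Adj c z) (hzD : z ∈ D3 G u)
    (hc' : G.Adj v c') (hcu' : c' ≠ u) (hz' : G.Adj c' z') (hzD' : z' ∈ D3 G u) :
    c = c' ∧ z = z' := by
  classical
  have hsum := spec_sum h huv
  have hmemc : c ∈ ((h.nfin v).diff (t := {u})).toFinset := by
    rw [Set.Finite.mem_toFinset]; exact ⟨hc, hcu⟩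
  have hmemc' : c' ∈ ((h.nfin v).diff (t := {u})).toFinset := by
    rw [Set.Finite.mem_toFinset]; exact ⟨hc', hcu'⟩
  have hfin : ∀ x : V, (G.neighborSet x ∩ D3 G u).Finite :=
    fun x => (h.nfin x).subset inter_subset_left
  have hpos : 1 ≤ (G.neighborSet c ∩ D3 G u).ncard := by
    have : z ∈ G.neighborSet c ∩ D3 G u := ⟨hz, hzD⟩
    have := (Set.ncard_pos (hfin c)).mpr ⟨z, this⟩
    omega
  have hpos' : 1 ≤ (G.neighborSet c' ∩ D3 G u).ncard := by
    have : z' ∈ G.neighborSet c' ∩ D3 G u := ⟨hz', hzD'⟩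
    have := (Set.ncard_pos (hfin c')).mpr ⟨z', this⟩
    omega
  have hcc : c = c' := sum_eq_one_unique hsum hmemc hmemc' hpos hpos'
  subst hcc
  refine ⟨rfl, ?_⟩
  have hle : (G.neighborSet c ∩ D3 G u).ncard ≤ 1 := by
    have := sum_le_mem (f := fun c => (G.neighborSet c ∩ D3 G u).ncard) hmemc
    beta_reduce at this
    omega
  exact (Set.ncard_le_one_iff (hfin c)).mp hle ⟨hz, hzD⟩ ⟨hz', hzD'⟩

lemma spec_exists (h : Setup G) {u v : V} (huv : G.Adj u v) :
    ∃ c z, G.Adj v c ∧ c ≠ u ∧ G.Adj c z ∧ z ∈ D3 G u := by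
  classical
  have hsum := spec_sum h huv
  obtain ⟨c, hcmem, hle⟩ := sum_pos_exists (le_of_eq hsum.symm)
  beta_reduce at hle
  rw [Set.Finite.mem_toFinset, Set.mem_diff, Set.mem_singleton_iff,
    SimpleGraph.mem_neighborSet] at hcmem
  obtain ⟨z, hzmem⟩ := Set.nonempty_of_ncard_ne_zero (s := G.neighborSet c ∩ D3 G u) (by omega)
  exact ⟨c, z, hcmem.1, hcmem.2, hzmem.1, hzmem.2⟩

/-- Vertices at distance 2 from b and distance 3 from z (for an edge (b,z)). -/
def A (G : SimpleGraph V) (b z : V) : Set V :=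
  {x | x ∈ D2 G b ∧ ¬ G.Adj z x ∧ ∀ y, G.Adj x y → ¬ G.Adj y z}

lemma ncard_A (h : Setup G) {b z : V} (hbz : G.Adj b z) : (A G b z).ncard = 1 := by
  classical
  set NZ : Set V := G.neighborSet z \ {b} with hNZ
  set C : Set V := {x | x ∈ D2 G b ∧ ¬ G.Adj z x ∧ ∃ y, G.Adj x y ∧ G.Adj y z} with hC
  have hNZsub : NZ ⊆ D2 G b := by
    rintro x ⟨hzx, hxb⟩
    rw [SimpleGraph.mem_neighborSet] at hzx
    rw [Set.mem_singleton_iff] at hxb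
    exact nbr_of_nbr_mem h hbz hzx hxb
  have hCfib : C = ⋃ y ∈ ((h.nfin z).diff (t := {b})).toFinset, (G.neighborSet y ∩ D2 G b) := by
    ext x
    simp only [hC, Set.mem_setOf_eq, Set.mem_iUnion, Set.Finite.mem_toFinset, Set.mem_diff,
      Set.mem_singleton_iff, SimpleGraph.mem_neighborSet, Set.mem_inter_iff, exists_prop]
    constructor
    · rintro ⟨hxD2, hnzx, y0, hxy0, hy0z⟩
      refine ⟨y0, ⟨hy0z.symm, fun e => D2_not_adj hxD2 (e ▸ hxy0).symm⟩, hxy0.symm, hxD2⟩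
    · rintro ⟨y, ⟨hzy, hyb⟩, hyx, hxD2⟩
      refine ⟨hxD2, fun hzx => h.tri hzx hyx.symm hzy.symm, y, hyx.symm, hzy.symm⟩
  have hCcard : C.ncard = 24 := by
    rw [hCfib, ncard_biUnion _ _ (fun y _ => (h.nfin y).subset inter_subset_left)]
    · have hsplit : ∀ y ∈ ((h.nfin z).diff (t := {b})).toFinset,
          (G.neighborSet y ∩ D2 G b).ncard + (G.neighborSet y ∩ D3 G b).ncard = 5 := by
        intro y hy
        rw [Set.Finite.mem_toFinset, Set.mem_diff, Set.mem_singleton_iff,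
          SimpleGraph.mem_neighborSet] at hy
        exact part5 h hbz hy.1 hy.2
      have hcard : ((h.nfin z).diff (t := {b})).toFinset.card = 5 := by
        rw [← Set.ncard_eq_toFinset_card _ ((h.nfin z).diff (t := {b})), fiber5 h hbz]
      have hsum := spec_sum h hbz
      have htot : ∑ y ∈ ((h.nfin z).diff (t := {b})).toFinset,
          ((G.neighborSet y ∩ D2 G b).ncard + (G.neighborSet y ∩ D3 G b).ncard) = 25 := by
        rw [Finset.sum_congr rfl hsplit, Finset.sum_const, hcard, smul_eq_mul]
      rw [Finset.sum_add_distrib, hsum] at htot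
      omega
    · intro y1 h1 y2 h2 hne w hw1 hw2
      rw [Set.Finite.mem_toFinset, Set.mem_diff, Set.mem_singleton_iff,
        SimpleGraph.mem_neighborSet] at h1 h2
      obtain ⟨hy1w, hwD2⟩ := hw1
      obtain ⟨hy2w, _⟩ := hw2
      rw [SimpleGraph.mem_neighborSet] at hy1w hy2w
      have hzw : z ≠ w := fun e => D2_not_adj hwD2 (e ▸ hbz)
      exact hne (common_unique h hzw h1.1 hy1w h2.1 hy2w)
  -- partition
  have hpart : D2 G b = NZ ∪ (C ∪ A G b z) := by
    ext x
    constructor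
    · intro hxD2
      by_cases hzx : G.Adj z x
      · exact Or.inl ⟨hzx, fun e => D2_ne hxD2 e⟩
      · by_cases hcom : ∃ y, G.Adj x y ∧ G.Adj y z
        · exact Or.inr (Or.inl ⟨hxD2, hzx, hcom⟩)
        · push_neg at hcom
          exact Or.inr (Or.inr ⟨hxD2, hzx, fun y hy => hcom y hy⟩)
    · rintro (hx | (hx | hx))
      · exact hNZsub hx
      · exact hx.1
      · exact hx.1
  have hfinD2 : (D2 G b).Finite := D2_finite h b
  have hfinNZ : NZ.Finite := (h.nfin z).diff
  have hfinC : C.Finite := hfinD2.subset (fun x hx => hx.1)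
  have hfinA : (A G b z).Finite := hfinD2.subset (fun x hx => hx.1)
  have hdisj1 : Disjoint NZ (C ∪ A G b z) := by
    rw [Set.disjoint_left]
    rintro x ⟨hzx, _⟩ (hx | hx)
    · exact hx.2.1 hzx
    · exact hx.2.1 hzx
  have hdisj2 : Disjoint C (A G b z) := by
    rw [Set.disjoint_left]
    rintro x ⟨_, _, y, hxy, hyz⟩ hxA
    exact hxA.2.2 y hxy hyz
  have h30 := ncard_D2 h b
  rw [hpart, Set.ncard_union_eq hdisj1 hfinNZ (hfinC.union hfinA),
    Set.ncard_union_eq hdisj2 hfinC hfinA, hCcard] at h30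
  have hNZ5 : NZ.ncard = 5 := fiber5 h hbz
  omega

/-- Case A: a distance-3 vertex has no neighbor at distance 4. -/
lemma no_far_nbr (h : Setup G) {u z w : V} (hz : z ∈ D3 G u) (hzw : G.Adj z w)
    (hw2 : ¬ G.Adj u w) (hw3 : w ∉ D2 G u) (hw4 : w ∉ D3 G u) : False := by
  classical
  obtain ⟨hnuz, hzu, hznD2, b, hbD2, hbz⟩ := hz
  obtain ⟨hnub, hbu, a, hua, hab⟩ := hbD2
  have hbD2' : b ∈ D2 G u := ⟨hnub, hbu, a, hua, hab⟩
  have hzD3u : z ∈ D3 G u := ⟨hnuz, hzu, hznD2, b, hbD2', hbz⟩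
  have hwu : w ≠ u := fun e => hnuz (by rw [e] at hzw; exact hzw.symm)
  have hwnb : ∀ m, G.Adj m w → m ≠ u ∧ ¬ G.Adj u m ∧ m ∉ D2 G u := by
    intro m hmw
    refine ⟨fun e => hw2 (e ▸ hmw), fun hum => hw3 ⟨hw2, hwu, m, hum, hmw⟩,
      fun hmD2 => hw4 (mem_D3_of_D2_nbr h hmD2 hmw hw2 hwu hw3)⟩
  -- membership of attachments in A G z w
  have hmemA : ∀ a0 b0, G.Adj u a0 → G.Adj a0 b0 → b0 ∈ D2 G u → G.Adj b0 z →
      a0 ∈ A G z w := by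
    intro a0 b0 hua0 ha0b0 hb0D2 hb0z
    refine ⟨⟨?_, ?_, b0, hb0z.symm, ha0b0.symm⟩, ?_, ?_⟩
    · intro hza0
      exact hznD2 ⟨hnuz, hzu, a0, hua0, hza0.symm⟩
    · intro e
      exact hnuz (e ▸ hua0)
    · intro hwa0
      exact (hwnb a0 hwa0.symm).2.1 hua0
    · intro y ha0y hyw
      have hy := hwnb y hyw
      exact hy.2.2 ⟨hy.2.1, hy.1, a0, hua0, ha0y⟩
  obtain ⟨x0, hx0⟩ := Set.ncard_eq_one.mp (ncard_A h hzw)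
  have hax0 : a = x0 := by
    have := hmemA a b hua hab hbD2' hbz
    rw [hx0] at this
    exact this
  -- Step 1 : z has a unique neighbor in D2
  have huniqb : ∀ b', b' ∈ D2 G u → G.Adj b' z → b' = b := by
    intro b' hb'D2 hb'z
    by_contra hne
    obtain ⟨hnub', hb'u, a', hua', hab'⟩ := hb'D2
    have hb'D2' : b' ∈ D2 G u := ⟨hnub', hb'u, a', hua', hab'⟩
    have haz : a ≠ z := fun e => hnuz (e ▸ hua)
    have haa' : a ≠ a' := by
      intro e
      subst e
      exact h.quad hab hbz hb'z.symm hab'.symm haz (fun e2 => hne e2.symm)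
    have ha'x0 : a' = x0 := by
      have := hmemA a' b' hua' hab' hb'D2' hb'z
      rw [hx0] at this
      exact this
    exact haa' (hax0.trans ha'x0.symm)
  -- Step 2 : other neighbors of z are at distance 3 with a distance-2 witness
  have hyD3 : ∀ y, G.Adj z y → y ≠ b → y ≠ w →
      ∃ m, m ∈ D2 G u ∧ G.Adj m y ∧ y ∈ D3 G u := by
    intro y hzy hyb hyw
    have hyu : y ≠ u := fun e => hnuz (e ▸ hzy).symm
    have hnuy : ¬ G.Adj u y := fun huy => hznD2 ⟨hnuz, hzu, y, huy, hzy.symm⟩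
    have hynD2 : y ∉ D2 G u := fun hyD2 => hyb (huniqb y hyD2 hzy.symm)
    have hwa : ¬ G.Adj a w := fun haw => (hwnb a haw).2.1 hua
    have hwnD2a : w ∉ D2 G a := by
      rintro ⟨_, _, m, ham, hmw⟩
      have hm := hwnb m hmw
      by_cases hum : G.Adj u m
      · exact hm.2.1 hum
      · exact hm.2.2 ⟨hum, hm.1, a, hua, ham⟩
    have hzD2a : z ∈ D2 G a :=
      ⟨fun haz => hznD2 ⟨hnuz, hzu, a, hua, haz⟩, fun e => hnuz (e ▸ hua), b, hab, hbz⟩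
    have hwD3a : w ∈ D3 G a := by
      refine ⟨hwa, fun e => hw2 (e ▸ hua), hwnD2a, z, hzD2a, hzw⟩
    have hya : ¬ G.Adj a y := fun hay => hynD2 ⟨hnuy, hyu, a, hua, hay⟩
    have hyne_a : y ≠ a := fun e => hnuy (e ▸ hua)
    by_cases hyD2a : y ∈ D2 G a
    · obtain ⟨_, _, m, ham, hmy⟩ := hyD2a
      have hmu : m ≠ u := fun e => hnuy (e ▸ hmy)
      have hnum : ¬ G.Adj u m := fun hum => hynD2 ⟨hnuy, hyu, m, hum, hmy⟩
      have hmD2 : m ∈ D2 G u := ⟨hnum, hmu, a, hua, ham⟩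
      exact ⟨m, hmD2, hmy, mem_D3_of_D2_nbr h hmD2 hmy hnuy hyu hynD2⟩
    · exfalso
      have hyD3a : y ∈ D3 G a := ⟨hya, hyne_a, hyD2a, z, hzD2a, hzy⟩
      exact hyw ((spec_unique h hab hbz (D2_ne hzD2a) hzw hwD3a hbz (D2_ne hzD2a) hzy
        hyD3a).2.symm)
  -- Step 3 : the other neighbors of b are at distance 2 with a distance-3 neighbor
  have hpfact : ∀ p, G.Adj b p → p ≠ a → p ≠ z →
      p ∈ D2 G u ∧ ∃ m, m ∈ D3 G u ∧ G.Adj p m := by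
    intro p hbp hpa hpz
    have hpu : p ≠ u := fun e => hnub (e ▸ hbp).symm
    have hnup : ¬ G.Adj u p := fun hup => hpa (att_unique h hnub hbu hup hbp.symm hua hab)
    have hpD2 : p ∈ D2 G u := by
      by_contra hpnD2
      have hpD3 : p ∈ D3 G u := ⟨hnup, hpu, hpnD2, b, hbD2', hbp⟩
      exact hpz (spec_unique h hua hab hbu hbp hpD3 hab hbu hbz hzD3u).2
    refine ⟨hpD2, ?_⟩
    have hpD2z : p ∈ D2 G z :=
      ⟨fun hzp => h.tri hzp hbp.symm hbz, fun e => hznD2 (e ▸ hpD2), b, hbz.symm, hbp⟩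
    by_cases hwp : G.Adj w p
    · exact absurd hpD2 (hwnb p hwp.symm).2.2
    · have hpnA : p ∉ A G z w := by
        intro hpA
        rw [hx0] at hpA
        exact hpa (hpA.trans hax0.symm)
      have hcom : ∃ m, G.Adj p m ∧ G.Adj m w := by
        by_contra hc
        push_neg at hc
        exact hpnA ⟨hpD2z, hwp, fun y hy => hc y hy⟩
      obtain ⟨m, hpm, hmw⟩ := hcom
      have hm := hwnb m hmw
      exact ⟨m, ⟨hm.2.1, hm.1, hm.2.2, p, hpD2, hpm⟩, hpm⟩
  -- Step 4 : nine distinct special vertices with distinct attachments in N(u)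
  -- attachment function
  have hattex : ∀ c : V, ∃ a0, c ∈ D2 G u → (G.Adj u a0 ∧ G.Adj a0 c) := by
    intro c
    by_cases hc : c ∈ D2 G u
    · obtain ⟨_, _, a0, h1, h2⟩ := hc
      exact ⟨a0, fun _ => ⟨h1, h2⟩⟩
    · exact ⟨c, fun hcc => absurd hcc hc⟩
  choose att hatt using hattex
  -- witness function for the y's
  have hgex : ∀ y : V, ∃ m, (G.Adj z y ∧ y ≠ b ∧ y ≠ w) →
      (m ∈ D2 G u ∧ G.Adj m y ∧ y ∈ D3 G u) := by
    intro y
    by_cases hy : G.Adj z y ∧ y ≠ b ∧ y ≠ w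
    · obtain ⟨m, hm⟩ := hyD3 y hy.1 hy.2.1 hy.2.2
      exact ⟨m, fun _ => hm⟩
    · exact ⟨y, fun hc => absurd hc hy⟩
  choose g hg using hgex
  set Pset : Set V := G.neighborSet b \ {a, z} with hPset
  set Yset : Set V := G.neighborSet z \ {b, w} with hYset
  have hYmem : ∀ y ∈ Yset, G.Adj z y ∧ y ≠ b ∧ y ≠ w := by
    intro y hy
    obtain ⟨h1, h2⟩ := hy
    rw [Set.mem_insert_iff, Set.mem_singleton_iff] at h2
    push_neg at h2
    exact ⟨h1, h2.1, h2.2⟩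
  have hgY : ∀ y ∈ Yset, (g y ∈ D2 G u ∧ G.Adj (g y) y ∧ y ∈ D3 G u) :=
    fun y hy => hg y (hYmem y hy)
  have hginj : Set.InjOn g Yset := by
    intro y1 h1 y2 h2 he
    by_contra hne
    have hg1 := hgY y1 h1
    have hg2 := hgY y2 h2
    have hm1 := hYmem y1 h1
    have hm2 := hYmem y2 h2
    have hzg : z ≠ g y1 := fun e => hznD2 (e ▸ hg1.1)
    exact h.quad hm1.1 hg1.2.1.symm (he ▸ hg2.2.1) hm2.1.symm hzg hne
  -- special vertices are determined by their attachment
  have hspec_inj : ∀ c c', c ∈ D2 G u → c' ∈ D2 G u →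
      (∃ x, x ∈ D3 G u ∧ G.Adj c x) → (∃ x', x' ∈ D3 G u ∧ G.Adj c' x') →
      att c = att c' → c = c' := by
    intro c c' hc hc' ⟨x, hx, hcx⟩ ⟨x', hx', hc'x⟩ he
    have h1 := hatt c hc
    have h2 := hatt c' hc'
    rw [← he] at h2
    exact (spec_unique h h1.1 h1.2 (D2_ne hc) hcx hx h2.2 (D2_ne hc') hc'x hx').1
  set X : Set V := insert b (Pset ∪ g '' Yset) with hX
  have hXspec : ∀ c ∈ X, c ∈ D2 G u ∧ ∃ x, x ∈ D3 G u ∧ G.Adj c x := by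
    intro c hc
    rcases hc with rfl | (hc | ⟨y, hy, rfl⟩)
    · exact ⟨hbD2', z, hzD3u, hbz⟩
    · obtain ⟨h1, h2⟩ := hc
      rw [Set.mem_insert_iff, Set.mem_singleton_iff] at h2
      push_neg at h2
      obtain ⟨hcD2, m, hmD3, hcm⟩ := hpfact c h1 h2.1 h2.2
      exact ⟨hcD2, m, hmD3, hcm⟩
    · have := hgY y hy
      exact ⟨this.1, y, this.2.2, this.2.1⟩
  -- cardinalities
  have hfinP : Pset.Finite := (h.nfin b).diff
  have hfinY : Yset.Finite := (h.nfin z).diff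
  have haz : a ≠ z := fun e => hnuz (e ▸ hua)
  have hbw : b ≠ w := fun e => hw3 (e ▸ hbD2')
  have hPcard : Pset.ncard = 4 := by
    rw [hPset, Set.ncard_diff ?sub (by exact (Set.finite_singleton z).insert a), h.reg b,
      Set.ncard_pair haz]
    case sub =>
      rintro x (rfl | rfl)
      · exact hab.symm
      · exact hbz
  have hYcard : Yset.ncard = 4 := by
    rw [hYset, Set.ncard_diff ?sub2 (by exact (Set.finite_singleton w).insert b), h.reg z,
      Set.ncard_pair hbw]
    case sub2 =>
      rintro x (rfl | rfl)
      · exact hbz.symm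
      · exact hzw
  have hgYcard : (g '' Yset).ncard = 4 := by
    rw [Set.ncard_image_of_injOn hginj, hYcard]
  have hbP : b ∉ Pset := fun hbb => G.irrefl hbb.1
  have hbgY : b ∉ g '' Yset := by
    rintro ⟨y, hy, he⟩
    have h1 := hgY y hy
    have h2 := hYmem y hy
    exact h.tri hbz h2.1 (he ▸ h1.2.1).symm
  have hPgY : Disjoint Pset (g '' Yset) := by
    rw [Set.disjoint_left]
    rintro p hp ⟨y, hy, he⟩
    have h1 := hgY y hy
    have h2 := hYmem y hy
    have hby : b ≠ y := fun e => h2.2.1 e.symm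
    have hpz2 : p ≠ z := by
      have := hp.2
      rw [Set.mem_insert_iff, Set.mem_singleton_iff] at this
      push_neg at this
      exact this.2
    exact h.quad hp.1 (he ▸ h1.2.1) h2.1.symm hbz.symm hby hpz2
  have hXcard : X.ncard = 9 := by
    rw [hX, Set.ncard_insert_of_notMem (by
        rintro (hc | hc)
        · exact hbP hc
        · exact hbgY hc) (hfinP.union (hfinY.image g)),
      Set.ncard_union_eq hPgY hfinP (hfinY.image g), hPcard, hgYcard]
  have hattinj : Set.InjOn att X := by
    intro c1 h1 c2 h2 he
    have hs1 := hXspec c1 h1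
    have hs2 := hXspec c2 h2
    exact hspec_inj c1 c2 hs1.1 hs2.1 hs1.2 hs2.2 he
  have hsub : att '' X ⊆ G.neighborSet u := by
    rintro _ ⟨c, hc, rfl⟩
    exact (hatt c (hXspec c hc).1).1
  have h9 : (att '' X).ncard = 9 := by
    rw [Set.ncard_image_of_injOn hattinj, hXcard]
  have hle := Set.ncard_le_ncard hsub (h.nfin u)
  rw [h9, h.reg u] at hle
  omega
/-- The set of vertices at distance 3 is a single vertex, all whose neighbors are at
distance 2. -/
lemma D3_single (h : Setup G) (u : V) :
    ∃ z0, D3 G u = {z0} ∧ G.neighborSet z0 ⊆ D2 G u := by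
  classical
  -- the set of (distance-2, distance-3) edges
  set E : Set (V × V) := {p | p.1 ∈ D2 G u ∧ p.2 ∈ D3 G u ∧ G.Adj p.1 p.2} with hE
  have heq1 : E = ⋃ v ∈ (h.nfin u).toFinset,
      ⋃ c ∈ ((h.nfin v).diff (t := {u})).toFinset,
        (fun z => (c, z)) '' (G.neighborSet c ∩ D3 G u) := by
    ext ⟨c, z⟩
    simp only [hE, Set.mem_setOf_eq, Set.mem_iUnion, Set.Finite.mem_toFinset, Set.mem_diff,
      Set.mem_singleton_iff, SimpleGraph.mem_neighborSet, Set.mem_image, Set.mem_inter_iff,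
      exists_prop, Prod.mk.injEq]
    constructor
    · rintro ⟨hcD2, hzD3, hcz⟩
      obtain ⟨hnuc, hcu, a0, hua0, ha0c⟩ := hcD2
      exact ⟨a0, hua0, c, ⟨ha0c, hcu⟩, z, ⟨hcz, hzD3⟩, rfl, rfl⟩
    · rintro ⟨v, huv, c', ⟨hvc', hc'u⟩, z', ⟨hc'z', hz'D3⟩, rfl, rfl⟩
      exact ⟨nbr_of_nbr_mem h huv hvc' hc'u, hz'D3, hc'z'⟩
  have hfib_fin : ∀ (c : V), ((fun z => (c, z)) '' (G.neighborSet c ∩ D3 G u)).Finite :=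
    fun c => (((h.nfin c).subset inter_subset_left).image _)
  have hEfin : E.Finite := by
    rw [heq1]
    exact biUnion_finite _ _ (fun v _ => biUnion_finite _ _ (fun c _ => hfib_fin c))
  have hinner : ∀ v, G.Adj u v →
      (⋃ c ∈ ((h.nfin v).diff (t := {u})).toFinset,
        (fun z => (c, z)) '' (G.neighborSet c ∩ D3 G u)).ncard = 1 := by
    intro v huv
    rw [ncard_biUnion _ _ (fun c _ => hfib_fin c)]
    · have : ∀ c ∈ ((h.nfin v).diff (t := {u})).toFinset,
          ((fun z => (c, z)) '' (G.neighborSet c ∩ D3 G u)).ncard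
            = (G.neighborSet c ∩ D3 G u).ncard := by
        intro c _
        exact Set.ncard_image_of_injOn (fun z1 _ z2 _ he => (Prod.mk.injEq _ _ _ _).mp he |>.2)
      rw [Finset.sum_congr rfl this, spec_sum h huv]
    · rintro c1 _ c2 _ hne p ⟨z1, _, rfl⟩ ⟨z2, _, he⟩
      exact hne ((Prod.mk.injEq _ _ _ _).mp he).1.symm
  have hE6 : E.ncard = 6 := by
    rw [heq1, ncard_biUnion]
    · have : ∀ v ∈ (h.nfin u).toFinset,
          (⋃ c ∈ ((h.nfin v).diff (t := {u})).toFinset,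
            (fun z => (c, z)) '' (G.neighborSet c ∩ D3 G u)).ncard = 1 := by
        intro v hv
        exact hinner v ((h.nfin u).mem_toFinset.mp hv)
      rw [Finset.sum_congr rfl this, Finset.sum_const, smul_eq_mul, mul_one,
        ← Set.ncard_eq_toFinset_card _ (h.nfin u), h.reg u]
    · exact fun v _ => biUnion_finite _ _ (fun c _ => hfib_fin c)
    · intro v1 h1 v2 h2 hne p hp1 hp2
      rw [Set.Finite.mem_toFinset] at h1 h2
      simp only [Set.mem_iUnion, Set.Finite.mem_toFinset, Set.mem_diff, Set.mem_singleton_iff,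
        Set.mem_image, Set.mem_inter_iff, exists_prop] at hp1 hp2
      obtain ⟨c1, ⟨hv1c, hc1u⟩, z1, _, he1⟩ := hp1
      obtain ⟨c2, ⟨hv2c, hc2u⟩, z2, _, he2⟩ := hp2
      have hc12 : c1 = c2 := by
        rw [← he2] at he1
        exact ((Prod.mk.injEq _ _ _ _).mp he1).1
      subst hc12
      rw [SimpleGraph.mem_neighborSet] at h1 h2
      have hc1D2 : c1 ∈ D2 G u := nbr_of_nbr_mem h h1 hv1c hc1u
      exact hne (att_unique h (D2_not_adj hc1D2) (D2_ne hc1D2) h1 hv1c h2 hv2c)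
  -- D3 is finite
  have hD3fin : (D3 G u).Finite := by
    refine (hEfin.image Prod.snd).subset ?_
    rintro z hz
    obtain ⟨hnuz, hzu, hznD2, b, hbD2, hbz⟩ := hz
    exact ⟨(b, z), ⟨hbD2, ⟨hnuz, hzu, hznD2, b, hbD2, hbz⟩, hbz⟩, rfl⟩
  have heq2 : E = ⋃ z ∈ hD3fin.toFinset,
      (fun c => (c, z)) '' (G.neighborSet z ∩ D2 G u) := by
    ext ⟨c, z⟩
    simp only [hE, Set.mem_setOf_eq, Set.mem_iUnion, Set.Finite.mem_toFinset, Set.mem_image,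
      Set.mem_inter_iff, SimpleGraph.mem_neighborSet, exists_prop, Prod.mk.injEq]
    constructor
    · rintro ⟨hcD2, hzD3, hcz⟩
      exact ⟨z, hzD3, c, ⟨hcz.symm, hcD2⟩, rfl, rfl⟩
    · rintro ⟨z', hz'D3, c', ⟨hz'c', hc'D2⟩, rfl, rfl⟩
      exact ⟨hc'D2, hz'D3, hz'c'.symm⟩
  have hsum1 : ∑ z ∈ hD3fin.toFinset, (G.neighborSet z ∩ D2 G u).ncard = 6 := by
    rw [← hE6, heq2, ncard_biUnion]
    · refine Finset.sum_congr rfl (fun z _ => ?_)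
      exact (Set.ncard_image_of_injOn (fun c1 _ c2 _ he =>
        ((Prod.mk.injEq _ _ _ _).mp he).1)).symm
    · exact fun z _ => ((h.nfin z).subset inter_subset_left).image _
    · rintro z1 _ z2 _ hne p ⟨c1, _, rfl⟩ ⟨c2, _, he⟩
      exact hne ((Prod.mk.injEq _ _ _ _).mp he).2.symm
  -- degree partition for distance-3 vertices
  have hpart : ∀ z ∈ D3 G u,
      (G.neighborSet z ∩ D2 G u).ncard + (G.neighborSet z ∩ D3 G u).ncard = 6 := by
    intro z hzD3
    have hkey : G.neighborSet z = (G.neighborSet z ∩ D2 G u) ∪ (G.neighborSet z ∩ D3 G u) := by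
      ext x
      simp only [Set.mem_union, Set.mem_inter_iff, SimpleGraph.mem_neighborSet]
      constructor
      · intro hzx
        have hnux : ¬ G.Adj u x := fun hux =>
          (D3_not_D2 hzD3) ⟨D3_not_adj hzD3, D3_ne hzD3, x, hux, hzx.symm⟩
        by_cases hxD2 : x ∈ D2 G u
        · exact Or.inl ⟨hzx, hxD2⟩
        · by_cases hxD3 : x ∈ D3 G u
          · exact Or.inr ⟨hzx, hxD3⟩
          · exact absurd (no_far_nbr h hzD3 hzx hnux hxD2 hxD3) not_false
      · rintro (⟨hzx, _⟩ | ⟨hzx, _⟩) <;> exact hzx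
    have hdisj : Disjoint (G.neighborSet z ∩ D2 G u) (G.neighborSet z ∩ D3 G u) := by
      rw [Set.disjoint_left]
      rintro x ⟨_, hx2⟩ ⟨_, hx3⟩
      exact D3_not_D2 hx3 hx2
    have h6 := h.reg z
    rw [hkey, Set.ncard_union_eq hdisj ((h.nfin z).subset inter_subset_left)
      ((h.nfin z).subset inter_subset_left)] at h6
    omega
  have htpos : ∀ z ∈ D3 G u, 1 ≤ (G.neighborSet z ∩ D2 G u).ncard := by
    intro z hzD3
    obtain ⟨hnuz, hzu, hznD2, b, hbD2, hbz⟩ := hzD3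
    have : b ∈ G.neighborSet z ∩ D2 G u := ⟨hbz.symm, hbD2⟩
    have := (Set.ncard_pos ((h.nfin z).subset inter_subset_left)).mpr ⟨b, this⟩
    omega
  -- D3 is nonempty
  have hne : (D3 G u).Nonempty := by
    obtain ⟨v0, hv0⟩ := Set.nonempty_of_ncard_ne_zero (s := G.neighborSet u)
      (by rw [h.reg u]; omega)
    obtain ⟨c, z, _, _, _, hzD3⟩ := spec_exists h hv0
    exact ⟨z, hzD3⟩
  set n := (D3 G u).ncard with hn
  have hncard : hD3fin.toFinset.card = n := (Set.ncard_eq_toFinset_card _ hD3fin).symm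
  have hn1 : 1 ≤ n := by
    have := (Set.ncard_pos hD3fin).mpr hne
    omega
  have hn6 : n ≤ 6 := by
    have hle : ∑ _z ∈ hD3fin.toFinset, 1 ≤
        ∑ z ∈ hD3fin.toFinset, (G.neighborSet z ∩ D2 G u).ncard :=
      Finset.sum_le_sum (fun z hz => htpos z (hD3fin.mem_toFinset.mp hz))
    rw [Finset.sum_const, smul_eq_mul, mul_one, hncard, hsum1] at hle
    exact hle
  rcases Nat.lt_or_ge n 2 with hlt | hge
  · -- n = 1
    have hcard1 : (D3 G u).ncard = 1 := by rw [← hn]; omega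
    obtain ⟨z0, hz0⟩ := Set.ncard_eq_one.mp hcard1
    refine ⟨z0, hz0, ?_⟩
    have hfinset : hD3fin.toFinset = {z0} := by
      ext x
      rw [Set.Finite.mem_toFinset, hz0]
      simp
    rw [hfinset, Finset.sum_singleton] at hsum1
    have heq := Set.eq_of_subset_of_ncard_le
      (inter_subset_left : G.neighborSet z0 ∩ D2 G u ⊆ G.neighborSet z0)
      (by rw [h.reg z0, hsum1]) (h.nfin z0)
    intro x hx
    rw [← heq] at hx
    exact hx.2
  · exfalso
    have hsum2 : ∑ z ∈ hD3fin.toFinset, (G.neighborSet z ∩ D3 G u).ncard = 6 * n - 6 := by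
      have htot : ∑ z ∈ hD3fin.toFinset,
          ((G.neighborSet z ∩ D2 G u).ncard + (G.neighborSet z ∩ D3 G u).ncard) = n * 6 := by
        rw [Finset.sum_congr rfl (fun z hz => hpart z (hD3fin.mem_toFinset.mp hz)),
          Finset.sum_const, smul_eq_mul, hncard]
      rw [Finset.sum_add_distrib, hsum1] at htot
      omega
    have hdle : ∀ z ∈ hD3fin.toFinset, (G.neighborSet z ∩ D3 G u).ncard ≤ n - 1 := by
      intro z hz
      rw [Set.Finite.mem_toFinset] at hz
      have hsub : G.neighborSet z ∩ D3 G u ⊆ D3 G u \ {z} := by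
        rintro x ⟨hx1, hx2⟩
        exact ⟨hx2, fun e => G.irrefl ((Set.mem_singleton_iff.mp e) ▸ hx1)⟩
      have hcd := Set.ncard_le_ncard hsub (hD3fin.diff)
      rw [Set.ncard_diff_singleton_of_mem hz, ← hn] at hcd
      exact hcd
    have hsum_le : 6 * n - 6 ≤ n * (n - 1) := by
      have hss := Finset.sum_le_sum hdle
      rw [hsum2, Finset.sum_const, smul_eq_mul, hncard] at hss
      exact hss
    have hn_eq6 : n = 6 := by
      have h2 : 6 * (n - 1) ≤ n * (n - 1) := by omega
      have h6 := Nat.le_of_mul_le_mul_right h2 (by omega : 0 < n - 1)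
      omega
    have hprod : n * (n - 1) = 30 := by rw [hn_eq6]
    have hall : ∀ z ∈ hD3fin.toFinset, (G.neighborSet z ∩ D3 G u).ncard = n - 1 := by
      by_contra hc
      push_neg at hc
      obtain ⟨z0, hz0mem, hz0ne⟩ := hc
      have hlt := Finset.sum_lt_sum hdle ⟨z0, hz0mem, lt_of_le_of_ne (hdle z0 hz0mem) hz0ne⟩
      rw [hsum2, Finset.sum_const, smul_eq_mul, hncard] at hlt
      omega
    have hadj : ∀ z ∈ D3 G u, ∀ x ∈ D3 G u, x ≠ z → G.Adj z x := by
      intro z hz x hx hxz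
      have hzmem := hD3fin.mem_toFinset.mpr hz
      have hsub : G.neighborSet z ∩ D3 G u ⊆ D3 G u \ {z} := by
        rintro y ⟨hy1, hy2⟩
        exact ⟨hy2, fun e => G.irrefl ((Set.mem_singleton_iff.mp e) ▸ hy1)⟩
      have heqz := Set.eq_of_subset_of_ncard_le hsub
        (by rw [Set.ncard_diff_singleton_of_mem hz, ← hn, hall z hzmem])
        (hD3fin.diff)
      have : x ∈ D3 G u \ {z} := ⟨hx, fun e => hxz (Set.mem_singleton_iff.mp e)⟩
      rw [← heqz] at this
      exact this.1
    obtain ⟨z1, hz1⟩ := hne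
    obtain ⟨z2, hz2⟩ : (D3 G u \ {z1}).Nonempty := by
      apply Set.nonempty_of_ncard_ne_zero
      rw [Set.ncard_diff_singleton_of_mem hz1, ← hn]
      omega
    obtain ⟨z3, hz3⟩ : ((D3 G u \ {z1}) \ {z2}).Nonempty := by
      apply Set.nonempty_of_ncard_ne_zero
      rw [Set.ncard_diff_singleton_of_mem hz2,
        Set.ncard_diff_singleton_of_mem hz1, ← hn]
      omega
    have hz2D3 : z2 ∈ D3 G u := hz2.1
    have hz3D3 : z3 ∈ D3 G u := hz3.1.1
    have h21 : z2 ≠ z1 := fun e => hz2.2 (Set.mem_singleton_iff.mpr e)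
    have h31 : z3 ≠ z1 := fun e => hz3.1.2 (Set.mem_singleton_iff.mpr e)
    have h32 : z3 ≠ z2 := fun e => hz3.2 (Set.mem_singleton_iff.mpr e)
    exact h.tri (hadj z1 hz1 z2 hz2D3 h21) (hadj z2 hz2D3 z3 hz3D3 h32)
      (hadj z3 hz3D3 z1 hz1 h31.symm)

lemma adj_ne' {x y : V} (hxy : G.Adj x y) : x ≠ y := G.ne_of_adj hxy

/-- The explicit 5-walk u-v-c-b-a-u. -/
lemma isCycle_explicit {u v c2 b2 a2 : V} (h1 : G.Adj u v) (h2 : G.Adj v c2)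
    (h3 : G.Adj c2 b2) (h4 : G.Adj b2 a2) (h5 : G.Adj a2 u)
    (hvb : v ≠ b2) (hva : v ≠ a2) (hcu : c2 ≠ u) (hca : c2 ≠ a2) (hbu : b2 ≠ u) :
    (Walk.cons h1 (Walk.cons h2 (Walk.cons h3 (Walk.cons h4
      (Walk.cons h5 Walk.nil))))).IsCycle := by
  have n1 := G.ne_of_adj h1
  have n2 := G.ne_of_adj h2
  have n3 := G.ne_of_adj h3
  have n4 := G.ne_of_adj h4
  have n5 := G.ne_of_adj h5
  refine ⟨⟨⟨?_⟩, by simp⟩, ?_⟩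
  · simp only [Walk.edges_cons, Walk.edges_nil, List.nodup_cons, List.mem_cons,
      List.not_mem_nil, or_false, List.nodup_nil, and_true, Sym2.eq, Sym2.rel_iff',
      Prod.mk.injEq, Prod.swap_prod_mk, not_or]
    refine ⟨⟨?_, ?_, ?_, ?_⟩, ⟨?_, ?_, ?_⟩, ⟨?_, ?_⟩, ?_⟩ <;> tauto
  · simp only [Walk.support_cons, Walk.support_nil, List.tail_cons, List.nodup_cons,
      List.mem_cons, List.not_mem_nil, or_false, List.nodup_nil, and_true, not_or]
    refine ⟨⟨?_, ?_, ?_, ?_⟩, ⟨?_, ?_, ?_⟩, ⟨?_, ?_⟩, ?_⟩ <;> tauto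

lemma tuple_facts (htri : ∀ ⦃x y z : V⦄, G.Adj x y → G.Adj y z → G.Adj z x → False)
    {u v a2 b2 c2 : V} (huv : G.Adj u v) (h1 : G.Adj u a2)
    (h2 : G.Adj a2 b2) (h3 : G.Adj b2 c2) (h4 : G.Adj c2 v) :
    a2 ≠ v ∧ b2 ≠ u ∧ b2 ≠ v ∧ c2 ≠ u ∧ a2 ≠ c2 := by
  refine ⟨?_, ?_, ?_, ?_, ?_⟩
  · rintro rfl
    exact htri h2 h3 h4
  · rintro rfl
    exact htri h3 h4 huv.symm
  · rintro rfl
    exact htri h1 h2 huv.symm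
  · rintro rfl
    exact htri h1 h2 h3
  · rintro rfl
    exact htri h1 h4 huv.symm

lemma toSubgraph_explicit_symm {u x1 x2 x3 x4 : V} {G : SimpleGraph V} (h1 : G.Adj u x1)
    (h2 : G.Adj x1 x2) (h3 : G.Adj x2 x3) (h4 : G.Adj x3 x4) (h5 : G.Adj x4 u) :
    (Walk.cons h5.symm (Walk.cons h4.symm (Walk.cons h3.symm (Walk.cons h2.symm
      (Walk.cons h1.symm Walk.nil))))).toSubgraph
      = (Walk.cons h1 (Walk.cons h2 (Walk.cons h3 (Walk.cons h4
        (Walk.cons h5 Walk.nil))))).toSubgraph := by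
  conv_rhs => rw [← Walk.toSubgraph_reverse]
  congr 1

lemma walk5_decomp {x y : V} {G : SimpleGraph V} (w : G.Walk x y) (hl : w.length = 5) :
    ∃ (x1 x2 x3 x4 : V) (h1 : G.Adj x x1) (h2 : G.Adj x1 x2) (h3 : G.Adj x2 x3)
      (h4 : G.Adj x3 x4) (h5 : G.Adj x4 y),
      w = Walk.cons h1 (Walk.cons h2 (Walk.cons h3 (Walk.cons h4 (Walk.cons h5 Walk.nil)))) := by
  cases w with
  | nil => simp at hl
  | cons h1 p1 =>
    cases p1 with
    | nil => simp at hl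
    | cons h2 p2 =>
      cases p2 with
      | nil => simp at hl
      | cons h3 p3 =>
        cases p3 with
        | nil => simp at hl
        | cons h4 p4 =>
          cases p4 with
          | nil => simp at hl
          | cons h5 p5 =>
            cases p5 with
            | nil => exact ⟨_, _, _, _, h1, h2, h3, h4, h5, rfl⟩
            | cons h6 p6 => simp [Walk.length_cons] at hl

/-- The number of 5-cycle subgraphs through an edge equals the number of P-tuples. -/
lemma cycle_count (htri : ∀ ⦃x y z : V⦄, G.Adj x y → G.Adj y z → G.Adj z x → False)
    {u v : V} (huv : G.Adj u v) :
    {c : G.Subgraph | IsCycleSub G 5 c ∧ s(u, v) ∈ c.edgeSet}.ncard = (P G u v).ncard := by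
  classical
  set F : V × V × V → G.Subgraph := fun t =>
    if ht : G.Adj u t.1 ∧ G.Adj t.1 t.2.1 ∧ G.Adj t.2.1 t.2.2 ∧ G.Adj t.2.2 v then
      (Walk.cons huv (Walk.cons ht.2.2.2.symm (Walk.cons ht.2.2.1.symm (Walk.cons ht.2.1.symm
        (Walk.cons ht.1.symm Walk.nil))))).toSubgraph
    else ⊥ with hF
  have hFval : ∀ t (ht : t ∈ P G u v), F t =
      (Walk.cons huv (Walk.cons ht.2.2.2.symm (Walk.cons ht.2.2.1.symm (Walk.cons ht.2.1.symm
        (Walk.cons ht.1.symm Walk.nil))))).toSubgraph := by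
    intro t ht
    simp only [hF]
    exact dif_pos ht
  have hAdjIff : ∀ (t) (ht : t ∈ P G u v) (x y : V), (F t).Adj x y ↔
      (s(x, y) = s(u, v) ∨ s(x, y) = s(v, t.2.2) ∨ s(x, y) = s(t.2.2, t.2.1) ∨
        s(x, y) = s(t.2.1, t.1) ∨ s(x, y) = s(t.1, u)) := by
    intro t ht x y
    rw [← SimpleGraph.Subgraph.mem_edgeSet, hFval t ht, Walk.edgeSet_toSubgraph]
    simp [Walk.edges_cons]
  have hset : {c : G.Subgraph | IsCycleSub G 5 c ∧ s(u, v) ∈ c.edgeSet} = F '' P G u v := by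
    ext c
    simp only [Set.mem_setOf_eq, Set.mem_image]
    constructor
    · rintro ⟨⟨x, w, hcyc, hlen, rfl⟩, hedge⟩
      rw [Walk.edgeSet_toSubgraph] at hedge
      have hedge2 : s(u, v) ∈ w.edges := hedge
      have hus : u ∈ w.support := w.fst_mem_support_of_mem_edges hedge2
      have hsub : (w.rotate u hus).toSubgraph = w.toSubgraph := w.toSubgraph_rotate hus
      have hcyc' : (w.rotate u hus).IsCycle := hcyc.rotate hus
      have hlen' : (w.rotate u hus).length = 5 := by
        have hpl := (w.rotate_edges u hus).perm.length_eq
        rw [Walk.length_edges, Walk.length_edges] at hpl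
        omega
      have hedge' : s(u, v) ∈ (w.rotate u hus).edges := (w.rotate_edges u hus).mem_iff.mpr hedge2
      rw [← hsub]
      obtain ⟨x1, x2, x3, x4, h1, h2, h3, h4, h5, hw⟩ := walk5_decomp (w.rotate u hus) hlen'
      rw [hw] at hedge' hcyc' ⊢
      have hnd := hcyc'.2
      simp only [Walk.support_cons, Walk.support_nil, List.tail_cons, List.nodup_cons,
        List.mem_cons, List.not_mem_nil, or_false, List.nodup_nil, and_true, not_or] at hnd
      simp only [Walk.edges_cons, Walk.edges_nil, List.mem_cons, List.not_mem_nil, or_false,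
        Sym2.eq, Sym2.rel_iff', Prod.mk.injEq, Prod.swap_prod_mk] at hedge'
      rcases hedge' with (⟨-, rfl⟩ | ⟨e1, -⟩) | (⟨e1, -⟩ | ⟨e1, -⟩) | (⟨e1, -⟩ | ⟨e1, -⟩) |
        (⟨e1, -⟩ | ⟨e1, -⟩) | (⟨e1, -⟩ | ⟨-, rfl⟩)
      · exact ⟨(x4, x3, x2), ⟨h5.symm, h4.symm, h3.symm, h2.symm⟩,
          by rw [hFval _ ⟨h5.symm, h4.symm, h3.symm, h2.symm⟩]⟩
      · exact absurd e1.symm hnd.1.2.2.2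
      · exact absurd e1.symm hnd.1.2.2.2
      · exact absurd e1.symm hnd.2.1.2.2
      · exact absurd e1.symm hnd.2.1.2.2
      · exact absurd e1.symm hnd.2.2.1.2
      · exact absurd e1.symm hnd.2.2.1.2
      · exact absurd e1.symm hnd.2.2.2.1
      · exact absurd e1.symm hnd.2.2.2.1
      · exact ⟨(x1, x2, x3), ⟨h1, h2, h3, h4⟩,
          by rw [hFval _ ⟨h1, h2, h3, h4⟩]; exact toSubgraph_explicit_symm h1 h2 h3 h4 h5⟩
    · rintro ⟨t, ht, rfl⟩
      obtain ⟨h1, h2, h3, h4⟩ := ht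
      obtain ⟨tf1, tf2, tf3, tf4, tf5⟩ := tuple_facts htri huv h1 h2 h3 h4
      refine ⟨⟨u, _, isCycle_explicit huv h4.symm h3.symm h2.symm h1.symm
        tf3.symm tf1.symm tf4 tf5.symm tf2, by simp, (hFval _ ⟨h1, h2, h3, h4⟩)⟩, ?_⟩
      rw [hFval _ ⟨h1, h2, h3, h4⟩, Walk.edgeSet_toSubgraph]
      simp
  rw [hset]
  apply Set.ncard_image_of_injOn
  rintro ⟨a1, b1, c1⟩ ht ⟨a2, b2, c2⟩ ht' he
  obtain ⟨g1, g2, g3, g4⟩ := ht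
  obtain ⟨g1', g2', g3', g4'⟩ := ht'
  obtain ⟨tf1, tf2, tf3, tf4, tf5⟩ := tuple_facts htri huv g1 g2 g3 g4
  obtain ⟨tf1', tf2', tf3', tf4', tf5'⟩ := tuple_facts htri huv g1' g2' g3' g4'
  have huvne := G.ne_of_adj huv
  have ha1 := G.ne_of_adj g1
  have ha2 := G.ne_of_adj g1'
  have hcv := G.ne_of_adj g4
  have hcv' := G.ne_of_adj g4'
  have hcb' := G.ne_of_adj g3'
  -- extract a
  have hea : a1 = a2 := by
    have hAdj : (F (a1, b1, c1)).Adj u a1 :=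
      (hAdjIff _ ⟨g1, g2, g3, g4⟩ u a1).mpr (Or.inr (Or.inr (Or.inr (Or.inr Sym2.eq_swap))))
    rw [he] at hAdj
    have := (hAdjIff _ ⟨g1', g2', g3', g4'⟩ u a1).mp hAdj
    simp only [Sym2.eq, Sym2.rel_iff', Prod.mk.injEq, Prod.swap_prod_mk] at this
    tauto
  -- extract c
  have hec : c1 = c2 := by
    have hAdj : (F (a1, b1, c1)).Adj v c1 :=
      (hAdjIff _ ⟨g1, g2, g3, g4⟩ v c1).mpr (Or.inr (Or.inl rfl))
    rw [he] at hAdj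
    have := (hAdjIff _ ⟨g1', g2', g3', g4'⟩ v c1).mp hAdj
    simp only [Sym2.eq, Sym2.rel_iff', Prod.mk.injEq, Prod.swap_prod_mk] at this
    tauto
  -- extract b
  have heb : b1 = b2 := by
    have hAdj : (F (a1, b1, c1)).Adj c1 b1 :=
      (hAdjIff _ ⟨g1, g2, g3, g4⟩ c1 b1).mpr (Or.inr (Or.inr (Or.inl rfl)))
    rw [he] at hAdj
    have := (hAdjIff _ ⟨g1', g2', g3', g4'⟩ c1 b1).mp hAdj
    simp only [Sym2.eq, Sym2.rel_iff', Prod.mk.injEq, Prod.swap_prod_mk] at this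
    subst hec
    have hcb := G.ne_of_adj g3
    tauto
  rw [hea, heb, hec]

end EGR

namespace EGR

variable {V : Type*} {G : SimpleGraph V}

/-- The closed ball of radius 3. -/
def S (G : SimpleGraph V) (u : V) : Set V :=
  insert u (G.neighborSet u ∪ D2 G u ∪ D3 G u)

lemma S_closed (h : Setup G) (u : V) {x y : V} (hx : x ∈ S G u) (hxy : G.Adj x y) :
    y ∈ S G u := by
  obtain ⟨z0, hz0, hz0sub⟩ := D3_single h u
  simp only [S, Set.mem_insert_iff, Set.mem_union] at hx ⊢
  rcases hx with rfl | ((hx | hx) | hx)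
  · exact Or.inr (Or.inl (Or.inl hxy))
  · by_cases hyu : y = u
    · exact Or.inl hyu
    · exact Or.inr (Or.inl (Or.inr (nbr_of_nbr_mem h hx hxy hyu)))
  · by_cases hyu : y = u
    · exact Or.inl hyu
    by_cases hyN : G.Adj u y
    · exact Or.inr (Or.inl (Or.inl hyN))
    by_cases hyD2 : y ∈ D2 G u
    · exact Or.inr (Or.inl (Or.inr hyD2))
    · exact Or.inr (Or.inr (mem_D3_of_D2_nbr h hx hxy hyN hyu hyD2))
  · have hxz : x = z0 := by rw [hz0] at hx; exact hx
    exact Or.inr (Or.inl (Or.inr (hz0sub (hxz ▸ hxy : G.Adj z0 y))))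

lemma S_card (h : Setup G) (u : V) : (S G u).ncard = 38 := by
  obtain ⟨z0, hz0, -⟩ := D3_single h u
  have hfinN := h.nfin u
  have hfinD2 := D2_finite h u
  have hfinD3 : (D3 G u).Finite := by rw [hz0]; exact Set.finite_singleton z0
  have hd1 : Disjoint (G.neighborSet u) (D2 G u) := by
    rw [Set.disjoint_left]
    exact fun x hx hx2 => D2_not_adj hx2 hx
  have hd2 : Disjoint (G.neighborSet u ∪ D2 G u) (D3 G u) := by
    rw [Set.disjoint_left]
    rintro x (hx | hx) hx3
    · exact D3_not_adj hx3 hx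
    · exact D3_not_D2 hx3 hx
  have hu : u ∉ G.neighborSet u ∪ D2 G u ∪ D3 G u := by
    rintro ((hx | hx) | hx)
    · exact G.irrefl hx
    · exact D2_ne hx rfl
    · exact D3_ne hx rfl
  rw [S, Set.ncard_insert_of_notMem hu ((hfinN.union hfinD2).union hfinD3),
    Set.ncard_union_eq hd2 (hfinN.union hfinD2) hfinD3,
    Set.ncard_union_eq hd1 hfinN hfinD2, h.reg u, ncard_D2 h u, hz0, Set.ncard_singleton]

lemma egirth_le_of_cycle {x : V} {w : G.Walk x x} (hw : w.IsCycle) :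
    G.egirth ≤ w.length := by
  rw [SimpleGraph.egirth]
  exact le_trans (iInf_le _ x) (le_trans (iInf_le _ w) (iInf_le _ hw))

lemma five_le_cycle (hg : G.girth = 5) {x : V} {w : G.Walk x x} (hw : w.IsCycle) :
    5 ≤ w.length := by
  have hnac : ¬ G.IsAcyclic := fun hac => by
    rw [hac.girth_eq_zero] at hg
    omega
  have hne : G.egirth ≠ ⊤ := fun he => hnac (egirth_eq_top.mp he)
  have hcoe : (G.girth : ℕ∞) = G.egirth := ENat.coe_toNat hne
  have hle : G.egirth ≤ (w.length : ℕ∞) := egirth_le_of_cycle hw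
  rw [← hcoe, hg] at hle
  exact_mod_cast hle

lemma tri_of_girth5 (hg : G.girth = 5) :
    ∀ ⦃x y z : V⦄, G.Adj x y → G.Adj y z → G.Adj z x → False := by
  intro x y z h1 h2 h3
  have n1 := G.ne_of_adj h1
  have n2 := G.ne_of_adj h2
  have n3 := G.ne_of_adj h3
  have hcyc : (Walk.cons h1 (Walk.cons h2 (Walk.cons h3 Walk.nil))).IsCycle := by
    refine ⟨⟨⟨?_⟩, by simp⟩, ?_⟩
    · simp only [Walk.edges_cons, Walk.edges_nil, List.nodup_cons, List.mem_cons,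
        List.not_mem_nil, or_false, List.nodup_nil, and_true, Sym2.eq, Sym2.rel_iff',
        Prod.mk.injEq, Prod.swap_prod_mk, not_or]
      refine ⟨⟨?_, ?_⟩, ?_⟩ <;> tauto
    · simp only [Walk.support_cons, Walk.support_nil, List.tail_cons, List.nodup_cons,
        List.mem_cons, List.not_mem_nil, or_false, List.nodup_nil, and_true, not_or]
      refine ⟨⟨?_, ?_⟩, ?_⟩ <;> tauto
  have := five_le_cycle hg hcyc
  simp [Walk.length_cons] at this

lemma quad_of_girth5 (hg : G.girth = 5) :
    ∀ ⦃x y z w : V⦄, G.Adj x y → G.Adj y z → G.Adj z w → G.Adj w x → x ≠ z → y ≠ w → False := by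
  intro x y z w h1 h2 h3 h4 hxz hyw
  have n1 := G.ne_of_adj h1
  have n2 := G.ne_of_adj h2
  have n3 := G.ne_of_adj h3
  have n4 := G.ne_of_adj h4
  have hcyc : (Walk.cons h1 (Walk.cons h2 (Walk.cons h3 (Walk.cons h4 Walk.nil)))).IsCycle := by
    refine ⟨⟨⟨?_⟩, by simp⟩, ?_⟩
    · simp only [Walk.edges_cons, Walk.edges_nil, List.nodup_cons, List.mem_cons,
        List.not_mem_nil, or_false, List.nodup_nil, and_true, Sym2.eq, Sym2.rel_iff',
        Prod.mk.injEq, Prod.swap_prod_mk, not_or]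
      refine ⟨⟨?_, ?_, ?_⟩, ⟨?_, ?_⟩, ?_⟩ <;> tauto
    · simp only [Walk.support_cons, Walk.support_nil, List.tail_cons, List.nodup_cons,
        List.mem_cons, List.not_mem_nil, or_false, List.nodup_nil, and_true, not_or]
      refine ⟨⟨?_, ?_, ?_⟩, ⟨?_, ?_⟩, ?_⟩ <;> tauto
  have := five_le_cycle hg hcyc
  simp [Walk.length_cons] at this

/-- Build a `Setup` from an edge-girth-regular graph. -/
lemma setup_of_isEGR {v : ℕ} (hE : IsEGR G v 6 5 24) : Setup G := by
  obtain ⟨hcard, hreg, hgirth, hlam⟩ := hE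
  have htri := tri_of_girth5 hgirth
  refine ⟨htri, quad_of_girth5 hgirth, hreg, ?_⟩
  intro u v huv
  rw [← cycle_count htri huv]
  exact hlam s(u, v) ((G.mem_edgeSet).mpr huv)

lemma isEGR_induced (h : Setup G) (hgirth : G.girth = 5) (u : V) :
    IsEGR (G.induce (S G u)) 38 6 5 24 := by
  classical
  set s : Set V := S G u with hs
  set H : SimpleGraph ↥s := G.induce s with hH
  have hadj : ∀ x y : ↥s, H.Adj x y ↔ G.Adj ↑x ↑y := by
    intro x y
    simp [hH]
  have htriH : ∀ ⦃x y z : ↥s⦄, H.Adj x y → H.Adj y z → H.Adj z x → False := by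
    intro x y z h1 h2 h3
    exact h.tri ((hadj _ _).mp h1) ((hadj _ _).mp h2) ((hadj _ _).mp h3)
  have huS : u ∈ s := Set.mem_insert u _
  -- regularity
  have hreg : ∀ x : ↥s, (H.neighborSet x).ncard = 6 := by
    intro x
    have himg : Subtype.val '' (H.neighborSet x) = G.neighborSet (↑x : V) := by
      ext y
      simp only [Set.mem_image, SimpleGraph.mem_neighborSet]
      constructor
      · rintro ⟨y', hy', rfl⟩
        exact (hadj x y').mp hy'
      · intro hy
        exact ⟨⟨y, S_closed h u x.2 hy⟩, (hadj _ _).mpr hy, rfl⟩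
    rw [← Set.ncard_image_of_injective _ Subtype.val_injective, himg, h.reg]
  -- a 5-cycle in H
  obtain ⟨v, hv⟩ := Set.nonempty_of_ncard_ne_zero (s := G.neighborSet u)
    (by rw [h.reg u]; omega)
  have huv : G.Adj u v := hv
  obtain ⟨⟨a, b, c⟩, ht⟩ := Set.nonempty_of_ncard_ne_zero (s := P G u v)
    (by rw [h.lam huv]; omega)
  obtain ⟨h1, h2, h3, h4⟩ := ht
  obtain ⟨tf1, tf2, tf3, tf4, tf5⟩ := tuple_facts h.tri huv h1 h2 h3 h4
  have hvS : v ∈ s := S_closed h u huS huv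
  have haS : a ∈ s := S_closed h u huS h1
  have hbS : b ∈ s := S_closed h u haS h2
  have hcS : c ∈ s := S_closed h u hbS h3
  have hadjH1 : H.Adj ⟨u, huS⟩ ⟨v, hvS⟩ := (hadj _ _).mpr huv
  have hadjH2 : H.Adj ⟨v, hvS⟩ ⟨c, hcS⟩ := (hadj _ _).mpr h4.symm
  have hadjH3 : H.Adj ⟨c, hcS⟩ ⟨b, hbS⟩ := (hadj _ _).mpr h3.symm
  have hadjH4 : H.Adj ⟨b, hbS⟩ ⟨a, haS⟩ := (hadj _ _).mpr h2.symm
  have hadjH5 : H.Adj ⟨a, haS⟩ ⟨u, huS⟩ := (hadj _ _).mpr h1.symm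
  have hlift : ∀ {p q : V} {hp : p ∈ s} {hq : q ∈ s}, p ≠ q →
      (⟨p, hp⟩ : ↥s) ≠ ⟨q, hq⟩ := by
    intro p q hp hq hne e
    exact hne (congrArg Subtype.val e)
  have hcycH : (Walk.cons hadjH1 (Walk.cons hadjH2 (Walk.cons hadjH3 (Walk.cons hadjH4
      (Walk.cons hadjH5 Walk.nil))))).IsCycle :=
    isCycle_explicit hadjH1 hadjH2 hadjH3 hadjH4 hadjH5
      (hlift tf3.symm) (hlift tf1.symm) (hlift tf4) (hlift tf5.symm) (hlift tf2)
  -- girth of H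
  have hmaple : ∀ (x : ↥s) (w : H.Walk x x), w.IsCycle → 5 ≤ w.length := by
    intro x w hw
    have hinj : Function.Injective (SimpleGraph.Embedding.induce s (G := G)) :=
      (SimpleGraph.Embedding.induce s).injective
    have hwG : (w.map (SimpleGraph.Embedding.induce s (G := G)).toHom).IsCycle :=
      hw.map hinj
    have := five_le_cycle hgirth hwG
    rwa [Walk.length_map] at this
  have hegirthH : H.egirth = 5 := by
    apply le_antisymm
    · have := egirth_le_of_cycle hcycH
      simpa using this
    · rw [le_egirth]
      intro x w hw
      exact_mod_cast hmaple x w hw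
  have hgirthH : H.girth = 5 := by
    rw [SimpleGraph.girth, hegirthH]
    rfl
  refine ⟨?_, hreg, hgirthH, ?_⟩
  · rw [Nat.card_coe_set_eq]
    exact S_card h u
  · intro e he
    revert he
    refine Sym2.inductionOn e (fun x y => ?_)
    intro he
    have hxy : H.Adj x y := (H.mem_edgeSet).mp he
    have hxyG : G.Adj ↑x ↑y := (hadj _ _).mp hxy
    rw [cycle_count htriH hxy]
    have himg : (fun t : ↥s × ↥s × ↥s => ((↑t.1 : V), (↑t.2.1 : V), (↑t.2.2 : V))) ''
        P H x y = P G ↑x ↑y := by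
      ext ⟨p, q, r⟩
      simp only [Set.mem_image, Prod.mk.injEq]
      constructor
      · rintro ⟨⟨p', q', r'⟩, ⟨k1, k2, k3, k4⟩, he1, he2, he3⟩
        subst he1; subst he2; subst he3
        exact ⟨(hadj _ _).mp k1, (hadj _ _).mp k2, (hadj _ _).mp k3, (hadj _ _).mp k4⟩
      · rintro ⟨k1, k2, k3, k4⟩
        have hpS : p ∈ s := S_closed h u x.2 k1
        have hqS : q ∈ s := S_closed h u hpS k2
        have hrS : r ∈ s := S_closed h u hqS k3
        exact ⟨(⟨p, hpS⟩, ⟨q, hqS⟩, ⟨r, hrS⟩), ⟨(hadj _ _).mpr k1, (hadj _ _).mpr k2,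
          (hadj _ _).mpr k3, (hadj _ _).mpr k4⟩, rfl, rfl, rfl⟩
    have hinj2 : Set.InjOn (fun t : ↥s × ↥s × ↥s => ((↑t.1 : V), (↑t.2.1 : V), (↑t.2.2 : V)))
        (P H x y) := by
      rintro ⟨p1, q1, r1⟩ - ⟨p2, q2, r2⟩ - he2
      simp only [Prod.mk.injEq] at he2
      obtain ⟨e1, e2, e3⟩ := he2
      rw [Prod.mk.injEq, Prod.mk.injEq]
      exact ⟨Subtype.ext e1, Subtype.ext e2, Subtype.ext e3⟩
    rw [← h.lam hxyG, ← himg, Set.ncard_image_of_injOn hinj2]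

end EGR

/-- There is no egr(v,6,5,24)-graph (using the known fact that there is no such graph on
38 vertices). -/
theorem stmt_15
    (known : ∀ (W : Type) (H : SimpleGraph W), ¬ IsEGR H 38 6 5 24) :
    ¬ ∃ (V : Type) (G : SimpleGraph V) (v : ℕ), IsEGR G v 6 5 24 := by
  rintro ⟨V, G, v, hE⟩
  have hgirth : G.girth = 5 := hE.2.2.1
  have hsetup := EGR.setup_of_isEGR hE
  have hnac : ¬ G.IsAcyclic := fun hac => by
    rw [hac.girth_eq_zero] at hgirth
    omega
  obtain ⟨x, w, hc, -⟩ := SimpleGraph.exists_girth_eq_length.mpr hnac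
  exact known ↥(EGR.S G x) (G.induce (EGR.S G x)) (EGR.isEGR_induced hsetup hgirth x)
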